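/- Let (φ^k)_{k≥0} be a sequence of real polynomials with deg φ^k = k that is orthogonal on [−1,1]. Let p ≥ 0, |q| ≤ p, m ≥ 0, and k = (k1,k2,k3), and set I_m(p,q,k) = ∫_{[−1,1]³} T_{p,m}^q(x1,x2,x3) φ^{k1}(x1) φ^{k2}(x2) φ^{k3}(x3) dx. If k2 is even, then I_m(p,q,k) is real (its imaginary part is zero); if k2 is odd, then I_m(p,q,k) is purely imaginary (its real part is zero). -/

import Mathlib

open MeasureTheory Polynomial intervalIntegral


/-- The Cartesian polynomial `T_{p,m}^q(x,y,z)`, the complex conjugate of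
`R_{p,m}^q(x) = ‖x‖^{2m+p} Y_p^q(x/‖x‖) / C_Y(p,q)` (a regular solid harmonic
weighted by `‖x‖^{2m}`). Here `s = 1` if `q ≥ 0` and `s = -1` if `q < 0`. -/


lemma polyInt (f g : ℝ → ℝ) (hf : Continuous f) (hg : Continuous g) :
    IntervalIntegrable (fun ζ => f ζ * g ζ) volume (-1) 1 :=
  (hf.mul hg).intervalIntegrable _ _

/-- span-type lemma: if `d` is orthogonal to `φ j` for `j < n` and `r` has degree `< n`,
then `∫ d r = 0`. -/
lemma aux_span (φ : ℕ → Polynomial ℝ) (hdeg : ∀ k : ℕ, (φ k).degree = k)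
    (n : ℕ) (d : Polynomial ℝ)
    (hortho : ∀ j < n, ∫ ζ in (-1:ℝ)..1, d.eval ζ * (φ j).eval ζ = 0) :
    ∀ N (r : Polynomial ℝ), r.natDegree < N → r.degree < (n : ℕ) →
      ∫ ζ in (-1:ℝ)..1, d.eval ζ * r.eval ζ = 0 := by
  intro N
  induction N with
  | zero => intro r h; exact absurd h (Nat.not_lt_zero _)
  | succ N ih =>
    intro r hrN hrn
    by_cases hr : r = 0
    · simp [hr]
    · set j := r.natDegree with hj
      have hjn : j < n := by
        rw [Polynomial.degree_eq_natDegree hr] at hrn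
        exact_mod_cast hrn
      have hφj : φ j ≠ 0 := by
        intro h
        have := hdeg j
        rw [h, Polynomial.degree_zero] at this
        exact absurd this (by simp)
      have hlcj : (φ j).leadingCoeff ≠ 0 := Polynomial.leadingCoeff_ne_zero.mpr hφj
      set c := r.leadingCoeff / (φ j).leadingCoeff with hc'
      have hc : c ≠ 0 := div_ne_zero (Polynomial.leadingCoeff_ne_zero.mpr hr) hlcj
      set r' := r - Polynomial.C c * φ j with hr'
      have hdegcφ : (Polynomial.C c * φ j).degree = r.degree := by
        rw [Polynomial.degree_C_mul hc, hdeg j, Polynomial.degree_eq_natDegree hr]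
      have hlc : r.leadingCoeff = (Polynomial.C c * φ j).leadingCoeff := by
        rw [Polynomial.leadingCoeff_mul, Polynomial.leadingCoeff_C, hc',
          div_mul_cancel₀ _ hlcj]
      have hdr' : r'.degree < r.degree := Polynomial.degree_sub_lt hdegcφ.symm hr hlc
      have split : ∀ ζ : ℝ, d.eval ζ * r.eval ζ
          = d.eval ζ * r'.eval ζ + c * (d.eval ζ * (φ j).eval ζ) := by
        intro ζ; simp [hr']; ring
      have i1 : IntervalIntegrable (fun ζ => d.eval ζ * r'.eval ζ) volume (-1) 1 :=
        polyInt _ _ d.continuous r'.continuous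
      have i2 : IntervalIntegrable (fun ζ => c * (d.eval ζ * (φ j).eval ζ)) volume (-1) 1 :=
        (polyInt _ _ d.continuous (φ j).continuous).const_mul c
      have hr'int : ∫ ζ in (-1:ℝ)..1, d.eval ζ * r'.eval ζ = 0 := by
        by_cases h0 : r' = 0
        · simp [h0]
        · exact ih r' (lt_of_lt_of_le (Polynomial.natDegree_lt_natDegree h0 hdr')
            (Nat.lt_succ_iff.mp hrN)) (lt_trans hdr' hrn)
      calc ∫ ζ in (-1:ℝ)..1, d.eval ζ * r.eval ζ
          = ∫ ζ in (-1:ℝ)..1, (d.eval ζ * r'.eval ζ + c * (d.eval ζ * (φ j).eval ζ)) := by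
            simp only [split]
        _ = (∫ ζ in (-1:ℝ)..1, d.eval ζ * r'.eval ζ)
              + ∫ ζ in (-1:ℝ)..1, c * (d.eval ζ * (φ j).eval ζ) :=
            intervalIntegral.integral_add i1 i2
        _ = 0 := by
            rw [hr'int, intervalIntegral.integral_const_mul, hortho j hjn]; ring

/-- Parity of orthogonal polynomials on `[-1,1]`. -/
lemma parity (φ : ℕ → Polynomial ℝ) (hdeg : ∀ k : ℕ, (φ k).degree = k)
    (horth : ∀ j k : ℕ, j ≠ k →
      ∫ ζ in (-1:ℝ)..1, (φ j).eval ζ * (φ k).eval ζ = 0) :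
    ∀ n x, (φ n).eval (-x) = (-1 : ℝ) ^ n * (φ n).eval x := by
  intro n
  induction n using Nat.strong_induction_on with
  | _ n IH =>
  suffices h : (φ n).comp (-Polynomial.X) = ((-1 : ℝ) ^ n) • φ n by
    intro x
    have := congrArg (Polynomial.eval x) h
    simpa [Polynomial.eval_comp] using this
  have hsq : ((-1:ℝ)^n) * ((-1:ℝ)^n) = 1 := by rw [← mul_pow]; norm_num
  set ψ := (φ n).comp (-Polynomial.X) with hψ
  have hnd : (φ n).natDegree = n := Polynomial.natDegree_eq_of_degree_eq_some (hdeg n)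
  have hφn0 : φ n ≠ 0 := by
    intro h
    have := hdeg n
    rw [h, Polynomial.degree_zero] at this
    exact absurd this (by simp)
  have hψlc : ψ.leadingCoeff = (φ n).leadingCoeff * (-1) ^ n := by
    rw [hψ, Polynomial.leadingCoeff_comp (by simp : (-Polynomial.X : Polynomial ℝ).natDegree ≠ 0)]
    simp [hnd]
  have hψnd : ψ.natDegree = n := by
    rw [hψ, Polynomial.natDegree_comp]; simp [hnd]
  have hψ0 : ψ ≠ 0 := by
    intro h
    rw [h, Polynomial.leadingCoeff_zero] at hψlc
    have : (φ n).leadingCoeff = 0 := by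
      have := congrArg (fun t => t * (-1:ℝ)^n) hψlc
      simpa [mul_assoc, hsq] using this.symm
    exact Polynomial.leadingCoeff_ne_zero.mpr hφn0 this
  set e := ((-1 : ℝ) ^ n) • ψ with he'
  have he : e = Polynomial.C ((-1 : ℝ) ^ n) * ψ := Polynomial.smul_eq_C_mul _
  have hne : ((-1:ℝ)^n) ≠ 0 := by positivity
  have hedeg : e.degree = (φ n).degree := by
    rw [he, Polynomial.degree_C_mul hne, Polynomial.degree_eq_natDegree hψ0, hψnd, hdeg n]
  have helc : (φ n).leadingCoeff = e.leadingCoeff := by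
    rw [he, Polynomial.leadingCoeff_mul, Polynomial.leadingCoeff_C, hψlc]
    rw [mul_comm ((φ n).leadingCoeff), ← mul_assoc, hsq, one_mul]
  set d := φ n - e with hd'
  by_cases hd : d = 0
  · have h1 : φ n = ((-1 : ℝ) ^ n) • ψ := by rwa [hd', sub_eq_zero] at hd
    have : ((-1:ℝ)^n) • φ n = ψ := by rw [h1, smul_smul, hsq, one_smul]
    exact this.symm
  · exfalso
    have hdd : d.degree < (n : ℕ) := by
      have := Polynomial.degree_sub_lt hedeg.symm hφn0 helc
      rwa [hdeg n] at this
    have e_eval : ∀ ζ, e.eval ζ = (-1:ℝ)^n * (φ n).eval (-ζ) := by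
      intro ζ; simp [he, hψ, Polynomial.eval_comp]
    have horthd : ∀ j < n, ∫ ζ in (-1:ℝ)..1, d.eval ζ * (φ j).eval ζ = 0 := by
      intro j hj
      have hsub : (∫ ζ in (-1:ℝ)..1, (φ n).eval (-ζ) * (φ j).eval ζ)
          = ∫ u in (-1:ℝ)..1, (φ n).eval u * (φ j).eval (-u) := by
        have := intervalIntegral.integral_comp_neg (a := (-1:ℝ)) (b := 1)
          (f := fun u => (φ n).eval u * (φ j).eval (-u))
        simpa using this
      have hkey : (∫ ζ in (-1:ℝ)..1, (φ n).eval (-ζ) * (φ j).eval ζ) = 0 := by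
        rw [hsub]
        have hpt : ∀ u : ℝ, (φ n).eval u * (φ j).eval (-u)
            = (-1:ℝ)^j * ((φ n).eval u * (φ j).eval u) := by
          intro u; rw [IH j hj]; ring
        simp only [hpt]
        rw [intervalIntegral.integral_const_mul, horth n j (Nat.ne_of_gt hj).symm.symm]
        ring
      have i1 : IntervalIntegrable (fun ζ => (φ n).eval ζ * (φ j).eval ζ) volume (-1) 1 :=
        polyInt _ _ (φ n).continuous (φ j).continuous
      have i2 : IntervalIntegrable (fun ζ => e.eval ζ * (φ j).eval ζ) volume (-1) 1 :=
        polyInt _ _ e.continuous (φ j).continuous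
      have hsplit : ∀ ζ : ℝ, d.eval ζ * (φ j).eval ζ
          = (φ n).eval ζ * (φ j).eval ζ - e.eval ζ * (φ j).eval ζ := by
        intro ζ; simp [hd']; ring
      have heint : (∫ ζ in (-1:ℝ)..1, e.eval ζ * (φ j).eval ζ) = 0 := by
        have hpt2 : ∀ ζ : ℝ, e.eval ζ * (φ j).eval ζ
            = (-1:ℝ)^n * ((φ n).eval (-ζ) * (φ j).eval ζ) := by
          intro ζ; rw [e_eval]; ring
        simp only [hpt2]
        rw [intervalIntegral.integral_const_mul, hkey, mul_zero]
      calc ∫ ζ in (-1:ℝ)..1, d.eval ζ * (φ j).eval ζ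
          = ∫ ζ in (-1:ℝ)..1,
              ((φ n).eval ζ * (φ j).eval ζ - e.eval ζ * (φ j).eval ζ) := by
            simp only [hsplit]
        _ = (∫ ζ in (-1:ℝ)..1, (φ n).eval ζ * (φ j).eval ζ)
              - ∫ ζ in (-1:ℝ)..1, e.eval ζ * (φ j).eval ζ :=
            intervalIntegral.integral_sub i1 i2
        _ = 0 := by rw [horth n j (Nat.ne_of_gt hj), heint, sub_zero]
    have hzero := aux_span φ hdeg n d horthd (d.natDegree + 1) d (Nat.lt_succ_self _) hdd
    have hpos : 0 < ∫ ζ in (-1:ℝ)..1, d.eval ζ * d.eval ζ := by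
      apply intervalIntegral.integral_pos (by norm_num)
      · exact (d.continuous.mul d.continuous).continuousOn
      · intro x _; exact mul_self_nonneg _
      · have hinf : (Set.Icc (-1:ℝ) 1).Infinite := Set.Icc_infinite (by norm_num)
        have hfin : {x : ℝ | d.IsRoot x}.Finite := Polynomial.finite_setOf_isRoot hd
        obtain ⟨c, hc1, hc2⟩ := (hinf.diff hfin).nonempty
        exact ⟨c, hc1, mul_self_pos.mpr hc2⟩
    exact absurd hzero (ne_of_gt hpos)

noncomputable def solidT (p m : ℕ) (q : ℤ) (x y z : ℝ) : ℂ :=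
  ((-1 : ℂ) ^ q.natAbs / 2 ^ p) *
    ((x : ℂ) - (if 0 ≤ q then (1 : ℂ) else -1) * Complex.I * (y : ℂ)) ^ q.natAbs *
    ∑ ν ∈ Finset.range ((p - q.natAbs) / 2 + 1),
      ((-1 : ℂ) ^ ν * (Nat.factorial (2 * p - 2 * ν) : ℂ) /
          ((Nat.factorial ν : ℂ) * (Nat.factorial (p - ν) : ℂ) *
            (Nat.factorial (p - q.natAbs - 2 * ν) : ℂ))) *
        (((x ^ 2 + y ^ 2 + z ^ 2 : ℝ) : ℂ)) ^ (m + ν) * (z : ℂ) ^ (p - q.natAbs - 2 * ν)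

lemma conj_intInt (f : ℝ → ℂ) (a b : ℝ) :
    (starRingEnd ℂ) (∫ x in a..b, f x) = ∫ x in a..b, (starRingEnd ℂ) (f x) := by
  simp only [intervalIntegral, map_sub, ← integral_conj]

lemma conj_solidT (p m : ℕ) (q : ℤ) (x y z : ℝ) :
    (starRingEnd ℂ) (solidT p m q x y z) = solidT p m q x (-y) z := by
  unfold solidT
  simp only [map_mul, map_div₀, map_pow, map_sum, map_sub, map_neg, map_one,
    Complex.conj_ofReal, Complex.conj_I, apply_ite (starRingEnd ℂ), map_natCast,
    map_ofNat]
  push_cast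
  ring_nf
  congr 1; congr 1; congr 1; refine Finset.sum_congr rfl ?_; intro i _; ring

/-- The integral `I_m(p,q,k) = ∫_{[-1,1]³} T_{p,m}^q(x₁,x₂,x₃) φ^{k₁}(x₁) φ^{k₂}(x₂) φ^{k₃}(x₃) dx`. -/
noncomputable def solidI (φ : ℕ → Polynomial ℝ) (p m : ℕ) (q : ℤ) (k₁ k₂ k₃ : ℕ) : ℂ :=
  ∫ x₁ in (-1:ℝ)..1, ∫ x₂ in (-1:ℝ)..1, ∫ x₃ in (-1:ℝ)..1,
    solidT p m q x₁ x₂ x₃ *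
      (((φ k₁).eval x₁ * (φ k₂).eval x₂ * (φ k₃).eval x₃ : ℝ) : ℂ)

/-- `I_m(p,q,k)` is real when `k₂` is even and purely imaginary when
`k₂` is odd. -/
theorem solidI_real_or_imaginary (φ : ℕ → Polynomial ℝ)
    (hdeg : ∀ k : ℕ, (φ k).degree = k)
    (horth : ∀ j k : ℕ, j ≠ k →
      ∫ ζ in (-1:ℝ)..1, (φ j).eval ζ * (φ k).eval ζ = 0)
    (p m : ℕ) (q : ℤ) (hq : q.natAbs ≤ p) (k₁ k₂ k₃ : ℕ) :
    (Even k₂ → (solidI φ p m q k₁ k₂ k₃).im = 0)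
      ∧ (Odd k₂ → (solidI φ p m q k₁ k₂ k₃).re = 0) := by
  have hpar : ∀ n x, (φ n).eval (-x) = (-1:ℝ)^n * (φ n).eval x := parity φ hdeg horth
  have key : (starRingEnd ℂ) (solidI φ p m q k₁ k₂ k₃)
      = (((-1:ℝ)^k₂ : ℝ) : ℂ) * solidI φ p m q k₁ k₂ k₃ := by
    unfold solidI
    simp only [conj_intInt, map_mul, Complex.conj_ofReal, conj_solidT]
    have h2 : ∀ (x u v : ℝ), solidT p m q x u v *
        ((((φ k₁).eval x * ((-1:ℝ)^k₂ * (φ k₂).eval u) * (φ k₃).eval v) : ℝ) : ℂ)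
        = (((-1:ℝ)^k₂ : ℝ) : ℂ) * (solidT p m q x u v *
            (((φ k₁).eval x * (φ k₂).eval u * (φ k₃).eval v : ℝ) : ℂ)) := by
      intros x u v; push_cast; ring
    have h1 : ∀ x₁ : ℝ,
        (∫ x₂ in (-1:ℝ)..1, ∫ x₃ in (-1:ℝ)..1, solidT p m q x₁ (-x₂) x₃ *
            (((φ k₁).eval x₁ * (φ k₂).eval x₂ * (φ k₃).eval x₃ : ℝ) : ℂ))
        = (((-1:ℝ)^k₂ : ℝ) : ℂ) * ∫ x₂ in (-1:ℝ)..1, ∫ x₃ in (-1:ℝ)..1,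
            solidT p m q x₁ x₂ x₃ *
              (((φ k₁).eval x₁ * (φ k₂).eval x₂ * (φ k₃).eval x₃ : ℝ) : ℂ) := by
      intro x₁
      have hcn := intervalIntegral.integral_comp_neg (a := (-1:ℝ)) (b := 1)
        (f := fun u => ∫ x₃ in (-1:ℝ)..1, solidT p m q x₁ u x₃ *
          (((φ k₁).eval x₁ * (φ k₂).eval (-u) * (φ k₃).eval x₃ : ℝ) : ℂ))
      simp only [neg_neg] at hcn
      rw [hcn]
      simp only [hpar k₂, h2, intervalIntegral.integral_const_mul]
    simp only [h1, intervalIntegral.integral_const_mul]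
  constructor
  · intro he
    have h1 : ((-1:ℝ)^k₂) = 1 := he.neg_one_pow
    rw [h1] at key
    simp only [Complex.ofReal_one, one_mul] at key
    exact Complex.conj_eq_iff_im.mp key
  · intro ho
    have h1 : ((-1:ℝ)^k₂) = -1 := ho.neg_one_pow
    rw [h1] at key
    have := congrArg Complex.re key
    simp [Complex.conj_re] at this
    linarith
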